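/- arXiv:1905.10593 — 2 statements merged into one kernel-verified Lean document; each statement's English description precedes it below -/
import Mathlib

section
/- For even r, the inequality E(u, span{Φ^o_{B,l}}_{l=1}^m)₂ ≤ (m+1)^{−r} ‖u^{(r)}‖₂ of Theorem 2 turns into equality for u(x) = sin((m+1)x); i.e., E(sin((m+1)·), span{Φ^o_{B,l}}_{l=1}^m)₂ = (m+1)^{−r} ‖(sin((m+1)·))^{(r)}‖₂. -/
open MeasureTheory Finset

noncomputable section

/-- `fc B k` is the `k`-th Fourier coefficient of the `2π`-periodic function `B`. -/
def fc (B : ℝ → ℂ) (k : ℤ) : ℂ :=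
  (1 / (2 * Real.pi)) * ∫ t in (-Real.pi)..Real.pi, B t * Complex.exp (-Complex.I * (k : ℂ) * (t : ℂ))

/-- `Phi B n l` is the function `Φ_{B,n,l}(x) = (1/(2n)) Σ_{j=0}^{2n-1} e^{iljπ/n} B(x - jπ/n)`. -/
def Phi (B : ℝ → ℂ) (n : ℕ) (l : ℤ) (x : ℝ) : ℂ :=
  (1 / (2 * (n : ℂ))) * ∑ j ∈ Finset.range (2 * n),
    Complex.exp (Complex.I * (l : ℂ) * (j : ℂ) * (Real.pi : ℂ) / (n : ℂ)) * B (x - j * Real.pi / n)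

/-- Even part of a function. -/
def evenPart (f : ℝ → ℂ) : ℝ → ℂ := fun x => (f x + f (-x)) / 2

/-- Odd part of a function. -/
def oddPart (f : ℝ → ℂ) : ℝ → ℂ := fun x => (f x - f (-x)) / 2

/-- `L²` norm over one period `(-π, π)`. -/
def L2norm (f : ℝ → ℂ) : ℝ :=
  (∫ x in (-Real.pi)..Real.pi, ‖f x‖ ^ 2) ^ ((1 : ℝ) / 2)

/-- Square integrability over one period. -/
def sqInt (f : ℝ → ℂ) : Prop :=
  IntervalIntegrable (fun x => ‖f x‖ ^ 2) volume (-Real.pi) Real.pi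

/-- Best `L²` approximation of `f` by the set `S`. -/
def bestApprox (f : ℝ → ℂ) (S : Set (ℝ → ℂ)) : ℝ :=
  ⨅ T : S, L2norm (fun x => f x - (T : ℝ → ℂ) x)

/-- The periodic Sobolev class `W^{(r)}₂`. -/
def SobolevPer (r : ℕ) (f : ℝ → ℂ) : Prop :=
  Function.Periodic f (2 * Real.pi) ∧
  (∀ k < r, Differentiable ℝ (iteratedDeriv k f)) ∧
  sqInt (iteratedDeriv r f)

/-- The space `S^×_{B,n,m} = span {Φ_{B,l}}_{l=1-m}^{m-1}`. -/
def Sspan (B : ℝ → ℂ) (n m : ℕ) : Set (ℝ → ℂ) :=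
  ↑(Submodule.span ℂ {f : ℝ → ℂ | ∃ l : ℤ, 1 - (m : ℤ) ≤ l ∧ l ≤ (m : ℤ) - 1 ∧ f = Phi B n l})

end

/- ### Auxiliary infrastructure -/

noncomputable section StmtAux

open intervalIntegral

/-- the measure of one period -/
def μπ : Measure ℝ := (volume : Measure ℝ).restrict (Set.Ioc (-Real.pi) Real.pi)

lemma aux_pi_le : -Real.pi ≤ Real.pi := by linarith [Real.pi_pos]

instance : IsFiniteMeasure μπ := by
  constructor
  rw [μπ, Measure.restrict_apply_univ]
  exact measure_Ioc_lt_top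

lemma II_iff {E : Type*} [NormedAddCommGroup E] {g : ℝ → E} :
    IntervalIntegrable g volume (-Real.pi) Real.pi ↔ Integrable g μπ := by
  rw [intervalIntegrable_iff_integrableOn_Ioc_of_le aux_pi_le, μπ]; rfl

lemma memLp_of_II {h : ℝ → ℂ}
    (h1 : IntervalIntegrable h volume (-Real.pi) Real.pi)
    (h2 : IntervalIntegrable (fun x => ‖h x‖ ^ 2) volume (-Real.pi) Real.pi) :
    MemLp h 2 μπ := by
  have i1 : Integrable h μπ := II_iff.mp h1
  rw [memLp_two_iff_integrable_sq_norm i1.aestronglyMeasurable]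
  have i2 : Integrable (fun x => ‖h x‖ ^ 2) μπ := II_iff.mp h2
  simpa using i2

lemma memLp_L1 {h : ℝ → ℂ} (hm : MemLp h 2 μπ) :
    IntervalIntegrable h volume (-Real.pi) Real.pi :=
  II_iff.mpr (hm.integrable (by norm_num))

lemma memLp_sq {h : ℝ → ℂ} (hm : MemLp h 2 μπ) :
    IntervalIntegrable (fun x => ‖h x‖ ^ 2) volume (-Real.pi) Real.pi := by
  apply II_iff.mpr
  have := (memLp_two_iff_integrable_sq_norm hm.aestronglyMeasurable).mp hm
  simpa using this

lemma II_conj {h : ℝ → ℂ} (hh : IntervalIntegrable h volume (-Real.pi) Real.pi) :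
    IntervalIntegrable (fun x => (starRingEnd ℂ) (h x)) volume (-Real.pi) Real.pi := by
  rw [II_iff] at hh ⊢
  refine ⟨(Complex.continuous_conj.comp_aestronglyMeasurable hh.1), ?_⟩
  have h2 := hh.2
  rw [hasFiniteIntegral_iff_norm] at h2 ⊢
  simpa using h2

lemma per_shift_II {E : Type*} [NormedAddCommGroup E] {g : ℝ → E}
    (hg : Function.Periodic g (2 * Real.pi))
    (h : IntervalIntegrable g volume (-Real.pi) Real.pi) {θ : ℝ}
    (h0 : 0 ≤ θ) (h2 : θ ≤ 2 * Real.pi) :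
    IntervalIntegrable (fun x => g (x - θ)) volume (-Real.pi) Real.pi := by
  have hL : IntervalIntegrable g volume (-(3 * Real.pi)) Real.pi := by
    have h1 : IntervalIntegrable (fun x => g (x + 2 * Real.pi)) volume
        (-Real.pi - 2 * Real.pi) (Real.pi - 2 * Real.pi) := h.comp_add_right _
    have h1' : IntervalIntegrable g volume (-(3*Real.pi)) (-Real.pi) := by
      have : (fun x => g (x + 2 * Real.pi)) = g := funext fun x => hg x
      rw [this] at h1
      have e1 : -Real.pi - 2*Real.pi = -(3*Real.pi) := by ring
      have e2 : Real.pi - 2*Real.pi = -Real.pi := by ring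
      rwa [e1, e2] at h1
    exact h1'.trans h
  have hs : IntervalIntegrable g volume (-Real.pi - θ) (Real.pi - θ) := by
    apply hL.mono_set
    rw [Set.uIcc_of_le (by linarith), Set.uIcc_of_le (by linarith [Real.pi_pos])]
    apply Set.Icc_subset_Icc <;> linarith
  have := hs.comp_sub_right θ
  simpa using this

lemma expsum_zero {n : ℕ} (hn : 0 < n) {k : ℤ} (hk : ¬ ((2 * (n:ℤ)) ∣ k)) :
    ∑ j ∈ Finset.range (2 * n),
      Complex.exp (Complex.I * (k : ℂ) * (j : ℂ) * (Real.pi : ℂ) / (n : ℂ)) = 0 := by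
  have hnC : (n : ℂ) ≠ 0 := Nat.cast_ne_zero.mpr hn.ne'
  set q : ℂ := Complex.exp (Complex.I * (k : ℂ) * (Real.pi : ℂ) / (n : ℂ)) with hq
  have hterm : ∀ j : ℕ,
      Complex.exp (Complex.I * (k : ℂ) * (j : ℂ) * (Real.pi : ℂ) / (n : ℂ)) = q ^ j := by
    intro j
    rw [hq, ← Complex.exp_nat_mul]
    congr 1
    field_simp
  rw [Finset.sum_congr rfl fun j _ => hterm j]
  have hπ : (Real.pi : ℂ) ≠ 0 := Complex.ofReal_ne_zero.mpr Real.pi_ne_zero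
  have hI : Complex.I ≠ 0 := Complex.I_ne_zero
  have hq1 : q ≠ 1 := by
    intro hq1
    rw [hq, Complex.exp_eq_one_iff] at hq1
    obtain ⟨t, ht⟩ := hq1
    apply hk
    refine ⟨t, ?_⟩
    have h2 : (k : ℂ) = 2 * n * t := by
      field_simp at ht
      apply mul_left_cancel₀ (mul_ne_zero hI hπ)
      linear_combination (Complex.I * (Real.pi:ℂ)) * ht
    exact_mod_cast h2
  rw [geom_sum_eq hq1]
  have hq2n : q ^ (2 * n) = 1 := by
    rw [hq, ← Complex.exp_nat_mul,
      show ((2 * n : ℕ) : ℂ) * (Complex.I * (k:ℂ) * (Real.pi:ℂ) / (n:ℂ))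
        = (k : ℂ) * (2 * (Real.pi:ℂ) * Complex.I) by push_cast; field_simp,
      Complex.exp_int_mul_two_pi_mul_I]
  rw [hq2n, sub_self, zero_div]

lemma exp_mul_cos (w z : ℂ) : Complex.exp w * Complex.cos z
    = (1/2) * (Complex.exp (w + z * Complex.I) + Complex.exp (w - z * Complex.I)) := by
  simp only [Complex.cos]
  rw [show w + z*Complex.I = z*Complex.I + w by ring, show w - z*Complex.I = -z*Complex.I + w by ring,
    Complex.exp_add, Complex.exp_add]
  ring

lemma exp_mul_sin (w z : ℂ) : Complex.exp w * Complex.sin z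
    = (Complex.I/2) * (Complex.exp (w - z * Complex.I) - Complex.exp (w + z * Complex.I)) := by
  simp only [Complex.sin]
  rw [show w + z*Complex.I = z*Complex.I + w by ring, show w - z*Complex.I = -z*Complex.I + w by ring,
    Complex.exp_add, Complex.exp_add]
  ring

lemma sum_conj_cos (n : ℕ) (hn : 0 < n) (l : ℤ) (M : ℕ)
    (hk1 : ¬ ((2*(n:ℤ)) ∣ ((M:ℤ) - l))) (hk2 : ¬ ((2*(n:ℤ)) ∣ (-((M:ℤ) + l)))) :
    ∑ j ∈ Finset.range (2*n),
      (starRingEnd ℂ) (Complex.exp (Complex.I * (l : ℂ) * (j : ℂ) * (Real.pi : ℂ) / (n : ℂ)))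
        * Complex.cos ((M:ℂ) * (((j : ℝ) * Real.pi / n : ℝ) : ℂ)) = 0 := by
  have hnC : (n : ℂ) ≠ 0 := Nat.cast_ne_zero.mpr hn.ne'
  have hterm : ∀ j ∈ Finset.range (2*n),
      (starRingEnd ℂ) (Complex.exp (Complex.I * (l : ℂ) * (j : ℂ) * (Real.pi : ℂ) / (n : ℂ)))
        * Complex.cos ((M:ℂ) * (((j : ℝ) * Real.pi / n : ℝ) : ℂ))
      = (1/2) * (Complex.exp (Complex.I * (((M:ℤ) - l : ℤ) : ℂ) * (j : ℂ) * (Real.pi : ℂ) / (n : ℂ))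
          + Complex.exp (Complex.I * ((-((M:ℤ) + l) : ℤ) : ℂ) * (j : ℂ) * (Real.pi : ℂ) / (n : ℂ))) := by
    intro j _
    rw [← Complex.exp_conj]
    simp only [map_mul, map_div₀, Complex.conj_I, Complex.conj_ofReal, map_intCast, map_natCast]
    rw [exp_mul_cos]
    congr 2
    · push_cast; ring
    · push_cast; ring
  rw [Finset.sum_congr rfl hterm, ← Finset.mul_sum, Finset.sum_add_distrib,
    expsum_zero hn hk1, expsum_zero hn hk2]
  simp

lemma sum_conj_sin (n : ℕ) (hn : 0 < n) (l : ℤ) (M : ℕ)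
    (hk1 : ¬ ((2*(n:ℤ)) ∣ ((M:ℤ) - l))) (hk2 : ¬ ((2*(n:ℤ)) ∣ (-((M:ℤ) + l)))) :
    ∑ j ∈ Finset.range (2*n),
      (starRingEnd ℂ) (Complex.exp (Complex.I * (l : ℂ) * (j : ℂ) * (Real.pi : ℂ) / (n : ℂ)))
        * Complex.sin ((M:ℂ) * (((j : ℝ) * Real.pi / n : ℝ) : ℂ)) = 0 := by
  have hnC : (n : ℂ) ≠ 0 := Nat.cast_ne_zero.mpr hn.ne'
  have hterm : ∀ j ∈ Finset.range (2*n),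
      (starRingEnd ℂ) (Complex.exp (Complex.I * (l : ℂ) * (j : ℂ) * (Real.pi : ℂ) / (n : ℂ)))
        * Complex.sin ((M:ℂ) * (((j : ℝ) * Real.pi / n : ℝ) : ℂ))
      = (Complex.I/2) * (Complex.exp (Complex.I * ((-((M:ℤ) + l) : ℤ) : ℂ) * (j : ℂ) * (Real.pi : ℂ) / (n : ℂ))
          - Complex.exp (Complex.I * (((M:ℤ) - l : ℤ) : ℂ) * (j : ℂ) * (Real.pi : ℂ) / (n : ℂ))) := by
    intro j _
    rw [← Complex.exp_conj]
    simp only [map_mul, map_div₀, Complex.conj_I, Complex.conj_ofReal, map_intCast, map_natCast]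
    rw [exp_mul_sin]
    congr 2
    · push_cast; ring
    · push_cast; ring
  rw [Finset.sum_congr rfl hterm, ← Finset.mul_sum, Finset.sum_sub_distrib,
    expsum_zero hn hk1, expsum_zero hn hk2]
  simp

lemma key_shift (g : ℝ → ℂ) (hgper : Function.Periodic g (2 * Real.pi)) (M : ℕ) (θ : ℝ)
    (hA : IntervalIntegrable (fun y => Complex.sin ((M:ℂ) * y) * g y) volume (-Real.pi) Real.pi)
    (hC : IntervalIntegrable (fun y => Complex.cos ((M:ℂ) * y) * g y) volume (-Real.pi) Real.pi) :
    (∫ x in (-Real.pi)..Real.pi, Complex.sin ((M:ℂ) * x) * g (x - θ))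
      = Complex.cos ((M:ℂ) * θ) * (∫ y in (-Real.pi)..Real.pi, Complex.sin ((M:ℂ) * y) * g y)
        + Complex.sin ((M:ℂ) * θ) * (∫ y in (-Real.pi)..Real.pi, Complex.cos ((M:ℂ) * y) * g y) := by
  set F : ℝ → ℂ := fun y => Complex.sin ((M:ℂ) * (y + θ)) * g y with hF
  have h1 : (∫ x in (-Real.pi)..Real.pi, Complex.sin ((M:ℂ) * x) * g (x - θ))
      = ∫ x in (-Real.pi)..Real.pi, F (x - θ) := by
    congr 1
    funext x
    simp only [hF]
    congr 2
    · push_cast; ring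
  rw [h1, intervalIntegral.integral_comp_sub_right F θ]
  have hFper : Function.Periodic F (2 * Real.pi) := by
    intro y
    simp only [hF]
    rw [hgper y]
    congr 1
    have h2 : (M:ℂ) * (((y + 2*Real.pi : ℝ):ℂ) + (θ:ℂ))
        = (M:ℂ)*((y:ℂ)+(θ:ℂ)) + (M:ℕ) * (2*(Real.pi:ℂ)) := by
      push_cast; ring
    rw [h2, Complex.sin_add_nat_mul_two_pi]
  have e := hFper.intervalIntegral_add_eq (-Real.pi - θ) (-Real.pi)
  rw [show -Real.pi - θ + 2*Real.pi = Real.pi - θ by ring,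
    show -Real.pi + 2*Real.pi = Real.pi by ring] at e
  rw [e]
  have hFeq : F = fun y : ℝ => Complex.cos ((M:ℂ)*(θ:ℂ)) * (Complex.sin ((M:ℂ)*(y:ℂ)) * g y)
      + Complex.sin ((M:ℂ)*(θ:ℂ)) * (Complex.cos ((M:ℂ)*(y:ℂ)) * g y) := by
    funext y
    simp only [hF]
    rw [show (M:ℂ) * ((y:ℂ)+(θ:ℂ)) = (M:ℂ)*(y:ℂ) + (M:ℂ)*(θ:ℂ) by ring, Complex.sin_add]
    ring
  rw [hFeq, intervalIntegral.integral_add ((hA.const_mul _)) ((hC.const_mul _)),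
    intervalIntegral.integral_const_mul, intervalIntegral.integral_const_mul]

lemma hasDerivAt_csin_const_mul (c : ℂ) (x : ℝ) :
    HasDerivAt (fun x : ℝ => Complex.sin (c * x)) (c * Complex.cos (c * x)) x := by
  have h0 : ∀ z : ℂ, HasDerivAt (fun z : ℂ => Complex.sin (c * z)) (c * Complex.cos (c * z)) z := by
    intro z
    simpa [mul_comm] using ((hasDerivAt_id z).const_mul c).csin
  exact (h0 x).comp_ofReal

lemma hasDerivAt_ccos_const_mul (c : ℂ) (x : ℝ) :
    HasDerivAt (fun x : ℝ => Complex.cos (c * x)) (-(c * Complex.sin (c * x))) x := by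
  have h0 : ∀ z : ℂ, HasDerivAt (fun z : ℂ => Complex.cos (c * z)) (-(c * Complex.sin (c * z))) z := by
    intro z
    simpa [mul_comm] using ((hasDerivAt_id z).const_mul c).ccos
  exact (h0 x).comp_ofReal

lemma iter_deriv_sin_mul (c : ℂ) (s : ℕ) :
    iteratedDeriv (2 * s) (fun x : ℝ => Complex.sin (c * x))
      = fun x : ℝ => (-(c ^ 2)) ^ s * Complex.sin (c * x) := by
  induction s with
  | zero => simp
  | succ s ih =>
    have h2 : 2 * (s + 1) = (2 * s) + 1 + 1 := by ring
    rw [h2, iteratedDeriv_succ, iteratedDeriv_succ, ih]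
    have hd1 : deriv (fun x : ℝ => (-(c ^ 2)) ^ s * Complex.sin (c * x))
        = fun x : ℝ => (-(c ^ 2)) ^ s * (c * Complex.cos (c * x)) := by
      funext y
      exact (((hasDerivAt_csin_const_mul c y).const_mul ((-(c ^ 2)) ^ s))).deriv
    rw [hd1]
    funext x
    have hd2 : deriv (fun y : ℝ => (-(c ^ 2)) ^ s * (c * Complex.cos (c * y))) x
        = (-(c ^ 2)) ^ s * (c * (-(c * Complex.sin (c * x)))) := by
      exact (((hasDerivAt_ccos_const_mul c x).const_mul c).const_mul ((-(c ^ 2)) ^ s)).deriv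
    rw [hd2]
    ring

end StmtAux

set_option maxHeartbeats 1000000 in
theorem stmt14 (B : ℝ → ℂ) (r n m : ℕ) (hr : 1 ≤ r) (hreven : Even r)
    (hm : 1 ≤ m) (hmn : m + 1 ≤ n)
    (hper : Function.Periodic B (2 * Real.pi)) (hB : sqInt B) (γ : ℤ → ℂ)
    (h1 : ∀ l : ℤ, 1 ≤ l → l ≤ (m : ℤ) → γ l ≠ 0 ∧
      ∀ k : ℤ, fc B (-l - 2 * (n : ℤ) * k) = γ l * fc B (l + 2 * (n : ℤ) * k))
    (h2 : ∀ ν : ℕ, 1 ≤ ν → fc B (2 * (n : ℤ) * (ν : ℤ)) = fc B (-(2 * (n : ℤ) * (ν : ℤ))))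
    (h3 : ∀ l : ℤ, 1 ≤ l → l ≤ (m : ℤ) → fc B l ≠ 0 ∧
      0 ≤ ∑' k : ℤ, ‖fc B (l + 2 * (n : ℤ) * k)‖ ^ 2 /
            (1 / (((l + 2 * (n : ℤ) * k : ℤ) : ℝ)) ^ (2 * r) - 1 / ((m : ℝ) + 1) ^ (2 * r))) :
    bestApprox (fun x : ℝ => Complex.sin (((m : ℂ) + 1) * (x : ℂ)))
      ↑(Submodule.span ℂ {f : ℝ → ℂ | ∃ l : ℤ, 1 ≤ l ∧ l ≤ (m : ℤ) ∧ f = oddPart (Phi B n l)}) =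
      (1 / ((m : ℝ) + 1) ^ r) *
        L2norm (iteratedDeriv r (fun x : ℝ => Complex.sin (((m : ℂ) + 1) * (x : ℂ)))) := by
  classical
  have hπ := Real.pi_pos
  have hn0 : 0 < n := by omega
  set M : ℕ := m + 1 with hMdef
  set f : ℝ → ℂ := fun x : ℝ => Complex.sin (((m : ℂ) + 1) * (x : ℂ)) with hf
  have hfM : f = fun x : ℝ => Complex.sin ((M:ℂ) * (x:ℂ)) := by
    funext x
    simp only [hf, hMdef]
    push_cast
    rfl
  have hfc : Continuous f := by
    rw [hfM]
    exact Complex.continuous_sin.comp (continuous_const.mul Complex.continuous_ofReal)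
  have hfodd : ∀ y : ℝ, f (-y) = - f y := by
    intro y
    rw [hfM]
    simp only [Complex.ofReal_neg, mul_neg, Complex.sin_neg]
  -- B is interval integrable
  have hfc1 : fc B 1 ≠ 0 := (h3 1 le_rfl (by exact_mod_cast hm)).1
  have hint1 : IntervalIntegrable
      (fun t : ℝ => B t * Complex.exp (-Complex.I * ((1:ℤ) : ℂ) * (t:ℂ))) volume
      (-Real.pi) Real.pi := by
    by_contra hno
    exact hfc1 (by rw [fc, intervalIntegral.integral_undef hno, mul_zero])
  have hBL1 : IntervalIntegrable B volume (-Real.pi) Real.pi := by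
    have hcont : Continuous fun t : ℝ => Complex.exp (Complex.I * (t:ℂ)) :=
      Complex.continuous_exp.comp (continuous_const.mul Complex.continuous_ofReal)
    have h := hint1.mul_continuousOn (μ := volume) hcont.continuousOn
    have heq : (fun t : ℝ => (B t * Complex.exp (-Complex.I * ((1:ℤ):ℂ) * (t:ℂ)))
        * Complex.exp (Complex.I * (t:ℂ))) = B := by
      funext t
      rw [mul_assoc, ← Complex.exp_add,
        show -Complex.I * ((1:ℤ):ℂ) * (t:ℂ) + Complex.I * (t:ℂ) = 0 by push_cast; ring,
        Complex.exp_zero, mul_one]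
    rwa [heq] at h
  -- conj B
  set g : ℝ → ℂ := fun x => (starRingEnd ℂ) (B x) with hg
  have hgper : Function.Periodic g (2 * Real.pi) := by
    intro x
    simp only [hg]
    exact congrArg _ (hper x)
  have hgL1 : IntervalIntegrable g volume (-Real.pi) Real.pi := II_conj hBL1
  have hAint : IntervalIntegrable (fun y => Complex.sin ((M:ℂ) * y) * g y) volume
      (-Real.pi) Real.pi := by
    apply hgL1.continuousOn_mul
    exact (Complex.continuous_sin.comp (continuous_const.mul Complex.continuous_ofReal)).continuousOn
  have hCint : IntervalIntegrable (fun y => Complex.cos ((M:ℂ) * y) * g y) volume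
      (-Real.pi) Real.pi := by
    apply hgL1.continuousOn_mul
    exact (Complex.continuous_cos.comp (continuous_const.mul Complex.continuous_ofReal)).continuousOn
  -- the shifts
  have hθ0 : ∀ j : ℕ, 0 ≤ (j:ℝ) * Real.pi / n := by
    intro j
    positivity
  have hθ2 : ∀ j ∈ Finset.range (2*n), (j:ℝ) * Real.pi / n ≤ 2 * Real.pi := by
    intro j hj
    rw [Finset.mem_range] at hj
    rw [div_le_iff₀ (by positivity)]
    have : (j:ℝ) ≤ 2*n := by exact_mod_cast hj.le
    nlinarith
  have hBper2 : Function.Periodic (fun x => ‖B x‖ ^ 2) (2 * Real.pi) :=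
    fun x => by simp only [hper x]
  have hshiftMem : ∀ θ : ℝ, 0 ≤ θ → θ ≤ 2 * Real.pi → MemLp (fun x => B (x - θ)) 2 μπ := by
    intro θ ha hb
    exact memLp_of_II (per_shift_II hper hBL1 ha hb) (per_shift_II hBper2 hB ha hb)
  have hreflMem : ∀ θ : ℝ, 0 ≤ θ → θ ≤ 2 * Real.pi → MemLp (fun x => B (-x - θ)) 2 μπ := by
    intro θ ha hb
    have r1 : IntervalIntegrable (fun x => B (-x - θ)) volume (-Real.pi) Real.pi := by
      have := ((IntervalIntegrable.iff_comp_neg (by simp)).mp (per_shift_II hper hBL1 ha hb)).symm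
      simpa using this
    have r2 : IntervalIntegrable (fun x => ‖B (-x - θ)‖ ^ 2) volume
        (-Real.pi) Real.pi := by
      have := ((IntervalIntegrable.iff_comp_neg (by simp)).mp (per_shift_II hBper2 hB ha hb)).symm
      simpa using this
    exact memLp_of_II r1 r2
  -- MemLp of Phi and friends
  have hPhiMem : ∀ l : ℤ, MemLp (Phi B n l) 2 μπ := by
    intro l
    have hsum : MemLp (fun x => ∑ j ∈ Finset.range (2 * n),
        Complex.exp (Complex.I * (l : ℂ) * (j : ℂ) * (Real.pi : ℂ) / (n : ℂ))
          * B (x - j * Real.pi / n)) 2 μπ := by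
      apply memLp_finsetSum
      intro j hj
      exact (hshiftMem _ (hθ0 j) (hθ2 j hj)).const_mul _
    exact hsum.const_mul _
  have hPhiNegMem : ∀ l : ℤ, MemLp (fun x => Phi B n l (-x)) 2 μπ := by
    intro l
    simp only [Phi]
    have hsum : MemLp (fun x => ∑ j ∈ Finset.range (2 * n),
        Complex.exp (Complex.I * (l : ℂ) * (j : ℂ) * (Real.pi : ℂ) / (n : ℂ))
          * B (-x - j * Real.pi / n)) 2 μπ := by
      apply memLp_finsetSum
      intro j hj
      exact (hreflMem _ (hθ0 j) (hθ2 j hj)).const_mul _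
    exact hsum.const_mul _
  have hOddMem : ∀ l : ℤ, MemLp (oddPart (Phi B n l)) 2 μπ := by
    intro l
    have he : oddPart (Phi B n l)
        = (2⁻¹ : ℂ) • (fun x => Phi B n l x - Phi B n l (-x)) := by
      funext x
      simp only [oddPart, Pi.smul_apply, smul_eq_mul]
      ring
    rw [he]
    exact ((hPhiMem l).sub (hPhiNegMem l)).const_smul _
  -- orthogonality of sin((m+1)x) to each Phi
  have horthPhi : ∀ l : ℤ, 1 ≤ l → l ≤ (m:ℤ) →
      (∫ x in (-Real.pi)..Real.pi, f x * (starRingEnd ℂ) (Phi B n l x)) = 0 := by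
    intro l hl1 hlm
    have hk1 : ¬ ((2*(n:ℤ)) ∣ ((M:ℤ) - l)) := by
      intro hdvd
      have hpos : 0 < (M:ℤ) - l := by
        have : (l:ℤ) ≤ (m:ℤ) := hlm
        omega
      have := Int.le_of_dvd hpos hdvd
      omega
    have hk2 : ¬ ((2*(n:ℤ)) ∣ (-((M:ℤ) + l))) := by
      intro hdvd
      have hdvd' : (2*(n:ℤ)) ∣ ((M:ℤ) + l) := (dvd_neg).mp hdvd
      have hpos : 0 < (M:ℤ) + l := by omega
      have := Int.le_of_dvd hpos hdvd'
      have hmn' : (m:ℤ) + 1 ≤ (n:ℤ) := by exact_mod_cast hmn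
      omega
    have hterm : ∀ j ∈ Finset.range (2*n), IntervalIntegrable
        (fun x => f x * g (x - (j:ℝ) * Real.pi / n)) volume (-Real.pi) Real.pi := by
      intro j hj
      exact (per_shift_II hgper hgL1 (hθ0 j) (hθ2 j hj)).continuousOn_mul hfc.continuousOn
    have hptws : (fun x => f x * (starRingEnd ℂ) (Phi B n l x))
        = fun x => (starRingEnd ℂ) (1/(2*(n:ℂ))) * ∑ j ∈ Finset.range (2*n),
            (starRingEnd ℂ) (Complex.exp (Complex.I * (l : ℂ) * (j : ℂ) * (Real.pi : ℂ) / (n : ℂ)))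
              * (f x * g (x - (j:ℝ) * Real.pi / n)) := by
      funext x
      simp only [Phi, map_mul, map_sum, Finset.mul_sum, hg]
      apply Finset.sum_congr rfl
      intro j _
      push_cast
      ring
    rw [hptws, intervalIntegral.integral_const_mul,
      intervalIntegral.integral_finset_sum (fun j _hj => (hterm j _hj).const_mul _)]
    have hsum0 : ∑ j ∈ Finset.range (2*n), (∫ x in (-Real.pi)..Real.pi,
        (starRingEnd ℂ) (Complex.exp (Complex.I * (l : ℂ) * (j : ℂ) * (Real.pi : ℂ) / (n : ℂ)))
          * (f x * g (x - (j:ℝ) * Real.pi / n))) = 0 := by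
      have hjval : ∀ j ∈ Finset.range (2*n), (∫ x in (-Real.pi)..Real.pi,
          (starRingEnd ℂ) (Complex.exp (Complex.I * (l : ℂ) * (j : ℂ) * (Real.pi : ℂ) / (n : ℂ)))
            * (f x * g (x - (j:ℝ) * Real.pi / n)))
          = (starRingEnd ℂ) (Complex.exp (Complex.I * (l : ℂ) * (j : ℂ) * (Real.pi : ℂ) / (n : ℂ)))
            * (Complex.cos ((M:ℂ) * (((j:ℝ) * Real.pi / n : ℝ) : ℂ))
                * (∫ y in (-Real.pi)..Real.pi, Complex.sin ((M:ℂ) * y) * g y)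
              + Complex.sin ((M:ℂ) * (((j:ℝ) * Real.pi / n : ℝ) : ℂ))
                * (∫ y in (-Real.pi)..Real.pi, Complex.cos ((M:ℂ) * y) * g y)) := by
        intro j hj
        rw [intervalIntegral.integral_const_mul]
        congr 1
        rw [hfM]
        exact key_shift g hgper M ((j:ℝ) * Real.pi / n) hAint hCint
      rw [Finset.sum_congr rfl hjval]
      have hdistr : ∑ j ∈ Finset.range (2*n),
          ((starRingEnd ℂ) (Complex.exp (Complex.I * (l : ℂ) * (j : ℂ) * (Real.pi : ℂ) / (n : ℂ)))
            * (Complex.cos ((M:ℂ) * (((j:ℝ) * Real.pi / n : ℝ) : ℂ))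
                * (∫ y in (-Real.pi)..Real.pi, Complex.sin ((M:ℂ) * y) * g y)
              + Complex.sin ((M:ℂ) * (((j:ℝ) * Real.pi / n : ℝ) : ℂ))
                * (∫ y in (-Real.pi)..Real.pi, Complex.cos ((M:ℂ) * y) * g y)))
          = (∑ j ∈ Finset.range (2*n),
              (starRingEnd ℂ) (Complex.exp (Complex.I * (l : ℂ) * (j : ℂ) * (Real.pi : ℂ) / (n : ℂ)))
                * Complex.cos ((M:ℂ) * (((j:ℝ) * Real.pi / n : ℝ) : ℂ)))
              * (∫ y in (-Real.pi)..Real.pi, Complex.sin ((M:ℂ) * y) * g y)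
            + (∑ j ∈ Finset.range (2*n),
              (starRingEnd ℂ) (Complex.exp (Complex.I * (l : ℂ) * (j : ℂ) * (Real.pi : ℂ) / (n : ℂ)))
                * Complex.sin ((M:ℂ) * (((j:ℝ) * Real.pi / n : ℝ) : ℂ)))
              * (∫ y in (-Real.pi)..Real.pi, Complex.cos ((M:ℂ) * y) * g y) := by
        rw [Finset.sum_mul, Finset.sum_mul, ← Finset.sum_add_distrib]
        apply Finset.sum_congr rfl
        intro j _
        ring
      rw [hdistr, sum_conj_cos n hn0 l M hk1 hk2, sum_conj_sin n hn0 l M hk1 hk2,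
        zero_mul, zero_mul, add_zero]
    rw [hsum0, mul_zero]
  -- orthogonality to reflected Phi
  have horthNeg : ∀ l : ℤ, 1 ≤ l → l ≤ (m:ℤ) →
      (∫ x in (-Real.pi)..Real.pi, f x * (starRingEnd ℂ) (Phi B n l (-x))) = 0 := by
    intro l hl1 hlm
    have he : (fun x => f x * (starRingEnd ℂ) (Phi B n l (-x)))
        = fun x => (fun y => f (-y) * (starRingEnd ℂ) (Phi B n l y)) (-x) := by
      funext x
      simp [neg_neg]
    rw [he, intervalIntegral.integral_comp_neg (fun y => f (-y) * (starRingEnd ℂ) (Phi B n l y)),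
      neg_neg]
    have he2 : (fun y => f (-y) * (starRingEnd ℂ) (Phi B n l y))
        = fun y => -(f y * (starRingEnd ℂ) (Phi B n l y)) := by
      funext y
      rw [hfodd y]
      ring
    rw [he2, intervalIntegral.integral_neg, horthPhi l hl1 hlm, neg_zero]
  -- orthogonality to the odd parts
  have horthOdd : ∀ l : ℤ, 1 ≤ l → l ≤ (m:ℤ) →
      (∫ x in (-Real.pi)..Real.pi, f x * (starRingEnd ℂ) (oddPart (Phi B n l) x)) = 0 := by
    intro l hl1 hlm
    have hu : IntervalIntegrable (fun x => f x * (starRingEnd ℂ) (Phi B n l x)) volume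
        (-Real.pi) Real.pi :=
      (II_conj (memLp_L1 (hPhiMem l))).continuousOn_mul hfc.continuousOn
    have hv : IntervalIntegrable (fun x => f x * (starRingEnd ℂ) (Phi B n l (-x))) volume
        (-Real.pi) Real.pi :=
      (II_conj (memLp_L1 (hPhiNegMem l))).continuousOn_mul hfc.continuousOn
    have he : (fun x => f x * (starRingEnd ℂ) (oddPart (Phi B n l) x))
        = fun x => (2⁻¹ : ℂ) * (f x * (starRingEnd ℂ) (Phi B n l x)
            - f x * (starRingEnd ℂ) (Phi B n l (-x))) := by
      funext x
      simp only [oddPart, map_div₀, map_sub, map_ofNat]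
      ring
    rw [he, intervalIntegral.integral_const_mul, intervalIntegral.integral_sub hu hv,
      horthPhi l hl1 hlm, horthNeg l hl1 hlm, sub_zero, mul_zero]
  -- each element of the span is L² and orthogonal to f
  have hspanP : ∀ T ∈ Submodule.span ℂ
      {h : ℝ → ℂ | ∃ l : ℤ, 1 ≤ l ∧ l ≤ (m : ℤ) ∧ h = oddPart (Phi B n l)},
      MemLp T 2 μπ ∧ (∫ x in (-Real.pi)..Real.pi, f x * (starRingEnd ℂ) (T x)) = 0 := by
    intro T hT
    induction hT using Submodule.span_induction with
    | mem T hTgen =>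
      obtain ⟨l, hl1, hlm, rfl⟩ := hTgen
      exact ⟨hOddMem l, horthOdd l hl1 hlm⟩
    | zero =>
      refine ⟨MemLp.zero, ?_⟩
      simp
    | add T1 T2 h1' h2' ih1 ih2 =>
      refine ⟨ih1.1.add ih2.1, ?_⟩
      have hu : IntervalIntegrable (fun x => f x * (starRingEnd ℂ) (T1 x)) volume
          (-Real.pi) Real.pi := (II_conj (memLp_L1 ih1.1)).continuousOn_mul hfc.continuousOn
      have hv : IntervalIntegrable (fun x => f x * (starRingEnd ℂ) (T2 x)) volume
          (-Real.pi) Real.pi := (II_conj (memLp_L1 ih2.1)).continuousOn_mul hfc.continuousOn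
      have he : (fun x => f x * (starRingEnd ℂ) ((T1 + T2) x))
          = fun x => f x * (starRingEnd ℂ) (T1 x) + f x * (starRingEnd ℂ) (T2 x) := by
        funext x
        simp only [Pi.add_apply, map_add]
        ring
      rw [he, intervalIntegral.integral_add hu hv, ih1.2, ih2.2, add_zero]
    | smul c T1 h1' ih1 =>
      refine ⟨ih1.1.const_smul c, ?_⟩
      have he : (fun x => f x * (starRingEnd ℂ) ((c • T1) x))
          = fun x => (starRingEnd ℂ) c * (f x * (starRingEnd ℂ) (T1 x)) := by
        funext x
        simp only [Pi.smul_apply, smul_eq_mul, map_mul]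
        ring
      rw [he, intervalIntegral.integral_const_mul, ih1.2, mul_zero]
  -- L2norm basics
  have hL2nonneg : ∀ h : ℝ → ℂ, 0 ≤ L2norm h := by
    intro h
    apply Real.rpow_nonneg
    apply intervalIntegral.integral_nonneg aux_pi_le
    intro x _
    positivity
  -- lower bound : for T in the span, L2norm f ≤ L2norm (f - T)
  have hfII : IntervalIntegrable f volume (-Real.pi) Real.pi := hfc.intervalIntegrable _ _
  have hfsqII : IntervalIntegrable (fun x => ‖f x‖ ^ 2) volume (-Real.pi) Real.pi :=
    ((continuous_norm.comp hfc).pow 2).intervalIntegrable _ _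
  have hlow : ∀ T : ℝ → ℂ, MemLp T 2 μπ →
      (∫ x in (-Real.pi)..Real.pi, f x * (starRingEnd ℂ) (T x)) = 0 →
      L2norm f ≤ L2norm (fun x => f x - T x) := by
    intro T hT h0
    have hTsq := memLp_sq hT
    have hIfT : IntervalIntegrable (fun x => f x * (starRingEnd ℂ) (T x)) volume
        (-Real.pi) Real.pi := (II_conj (memLp_L1 hT)).continuousOn_mul hfc.continuousOn
    have hIre : IntervalIntegrable (fun x => (f x * (starRingEnd ℂ) (T x)).re) volume
        (-Real.pi) Real.pi := by
      exact II_iff.mpr (Complex.reCLM.integrable_comp (II_iff.mp hIfT))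
    have hpt : (fun x => ‖f x - T x‖ ^ 2)
        = fun x => (‖f x‖ ^ 2 + ‖T x‖ ^ 2)
            - 2 * (f x * (starRingEnd ℂ) (T x)).re := by
      funext x
      rw [Complex.sq_norm, Complex.normSq_sub, Complex.sq_norm, Complex.sq_norm]
    have hre0 : (∫ x in (-Real.pi)..Real.pi, (f x * (starRingEnd ℂ) (T x)).re) = 0 := by
      rw [intervalIntegral.integral_of_le aux_pi_le] at h0 ⊢
      have h0' : (∫ x, f x * (starRingEnd ℂ) (T x) ∂μπ) = 0 := h0
      have hcc := Complex.reCLM.integral_comp_comm (II_iff.mp hIfT)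
      rw [h0'] at hcc
      simpa [μπ] using hcc
    have hval : (∫ x in (-Real.pi)..Real.pi, ‖f x - T x‖ ^ 2)
        = (∫ x in (-Real.pi)..Real.pi, ‖f x‖ ^ 2)
          + (∫ x in (-Real.pi)..Real.pi, ‖T x‖ ^ 2) := by
      rw [hpt, intervalIntegral.integral_sub (hfsqII.add hTsq) (hIre.const_mul 2),
        intervalIntegral.integral_const_mul, hre0, mul_zero, sub_zero,
        intervalIntegral.integral_add hfsqII hTsq]
    have hTnonneg : 0 ≤ ∫ x in (-Real.pi)..Real.pi, ‖T x‖ ^ 2 := by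
      apply intervalIntegral.integral_nonneg aux_pi_le
      intro x _
      positivity
    have hfnonneg : 0 ≤ ∫ x in (-Real.pi)..Real.pi, ‖f x‖ ^ 2 := by
      apply intervalIntegral.integral_nonneg aux_pi_le
      intro x _
      positivity
    simp only [L2norm]
    apply Real.rpow_le_rpow hfnonneg _ (by norm_num)
    rw [hval]
    linarith
  -- the infimum equals L2norm f
  have hbest : bestApprox f
      ↑(Submodule.span ℂ {h : ℝ → ℂ | ∃ l : ℤ, 1 ≤ l ∧ l ≤ (m : ℤ) ∧ h = oddPart (Phi B n l)})
      = L2norm f := by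
    rw [bestApprox]
    apply le_antisymm
    · have hmem : (0 : ℝ → ℂ) ∈ Submodule.span ℂ
          {h : ℝ → ℂ | ∃ l : ℤ, 1 ≤ l ∧ l ≤ (m : ℤ) ∧ h = oddPart (Phi B n l)} :=
        Submodule.zero_mem _
      have hbdd : BddBelow (Set.range fun T : ↥(Submodule.span ℂ
          {h : ℝ → ℂ | ∃ l : ℤ, 1 ≤ l ∧ l ≤ (m : ℤ) ∧ h = oddPart (Phi B n l)}) =>
          L2norm fun x => f x - (T : ℝ → ℂ) x) := by
        refine ⟨0, ?_⟩
        rintro _ ⟨T, rfl⟩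
        exact hL2nonneg _
      have := ciInf_le hbdd (⟨0, hmem⟩ : ↥(Submodule.span ℂ
          {h : ℝ → ℂ | ∃ l : ℤ, 1 ≤ l ∧ l ≤ (m : ℤ) ∧ h = oddPart (Phi B n l)}))
      simpa using this
    · apply le_ciInf
      intro T
      exact hlow (T : ℝ → ℂ) (hspanP _ T.2).1 (hspanP _ T.2).2
  rw [hbest]
  -- compute the right-hand side
  obtain ⟨s, hs⟩ := hreven
  have hr2 : r = 2 * s := by omega
  have hiter : iteratedDeriv r f = fun x : ℝ => (-((M:ℂ) ^ 2)) ^ s * Complex.sin ((M:ℂ) * x) := by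
    rw [hfM, hr2]
    exact iter_deriv_sin_mul (M:ℂ) s
  rw [hiter]
  have hKeq : ∀ x : ℝ, ‖(-((M:ℂ) ^ 2)) ^ s * Complex.sin ((M:ℂ) * x)‖ ^ 2
      = ((M:ℝ) ^ r) ^ 2 * ‖Complex.sin ((M:ℂ) * x)‖ ^ 2 := by
    intro x
    rw [norm_mul, norm_pow, norm_neg, norm_pow, Complex.norm_natCast, mul_pow]
    rw [hr2]
    ring
  have hAnn : 0 ≤ ∫ x in (-Real.pi)..Real.pi, ‖Complex.sin ((M:ℂ) * x)‖ ^ 2 := by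
    apply intervalIntegral.integral_nonneg aux_pi_le
    intro x _
    positivity
  have hL2val : L2norm (fun x : ℝ => (-((M:ℂ) ^ 2)) ^ s * Complex.sin ((M:ℂ) * x))
      = (M:ℝ) ^ r * L2norm f := by
    simp only [L2norm]
    rw [intervalIntegral.integral_congr (g := fun x =>
        ((M:ℝ) ^ r) ^ 2 * ‖Complex.sin ((M:ℂ) * x)‖ ^ 2) (fun x _ => hKeq x)]
    rw [intervalIntegral.integral_const_mul]
    rw [← Real.sqrt_eq_rpow, ← Real.sqrt_eq_rpow,
      Real.sqrt_mul (by positivity), Real.sqrt_sq (by positivity)]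
    congr 2
    rw [hfM]
  rw [hL2val]
  have hMpos : (0:ℝ) < (M:ℝ) ^ r := by positivity
  have hcast : ((m:ℝ) + 1) = (M:ℝ) := by
    rw [hMdef]
    push_cast
    ring
  rw [hcast]
  field_simp
end

section
/- Let r, n, m ∈ ℕ with m ≤ n, and suppose B ∈ L² satisfies |l+2nk|^r |c_{l+2nk}(B)| ≤ |l|^r |c_l(B)| for all 1 ≤ |l| ≤ m−1 and all k ∈ ℤ. Then for all 1 ≤ |l| ≤ m−1, Σ_{k∈ℤ} |c_{l+2nk}(B)|² / ( (l+2nk)^{−2r} − m^{−2r} ) ≥ 0. -/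
open MeasureTheory Finset

section auxstmt19
open Finset Filter
open Finset Filter

-- quadratic lower bound on the denominators, integer version
private lemma quad_bound_int {n m l k : ℤ} (hmn : m ≤ n) (hm : 2 ≤ m)
    (hl2 : |l| ≤ m - 1) (hk : k ≠ 0) :
    k ^ 2 ≤ 2 * ((l + 2 * n * k) ^ 2 - m ^ 2) := by
  obtain ⟨hla, hlb⟩ := abs_le.mp hl2
  rcases hk.lt_or_gt with hk' | hk'
  · have hk1 : k ≤ -1 := by omega
    have h1 : l + 2 * n * k ≤ n * k - 1 := by nlinarith
    have h0 : n * k - 1 ≤ 0 := by nlinarith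
    have h2 : (n * k - 1) ^ 2 ≤ (l + 2 * n * k) ^ 2 := by nlinarith
    nlinarith [mul_nonneg (by nlinarith : (0:ℤ) ≤ n ^ 2 - 1) (by nlinarith : (0:ℤ) ≤ k ^ 2 - 1)]
  · have hk1 : 1 ≤ k := hk'
    have h1 : n * k + 1 ≤ l + 2 * n * k := by nlinarith
    have h0 : 0 ≤ n * k + 1 := by nlinarith
    have h2 : (n * k + 1) ^ 2 ≤ (l + 2 * n * k) ^ 2 := by nlinarith
    nlinarith [mul_nonneg (by nlinarith : (0:ℤ) ≤ n ^ 2 - 1) (by nlinarith : (0:ℤ) ≤ k ^ 2 - 1)]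

private lemma quad_bound {n m : ℕ} {l k : ℤ} (hmn : m ≤ n) (hm : 2 ≤ m)
    (hl2 : |l| ≤ (m:ℤ) - 1) (hk : k ≠ 0) :
    ((k:ℝ)) ^ 2 / 2 ≤ ((l:ℝ) + 2 * n * k) ^ 2 - (m:ℝ) ^ 2 := by
  have h := quad_bound_int (n := n) (m := m) (l := l) (k := k)
    (by exact_mod_cast hmn) (by exact_mod_cast hm) hl2 hk
  have h' : ((k:ℝ)) ^ 2 ≤ 2 * (((l:ℝ) + 2 * n * k) ^ 2 - (m:ℝ) ^ 2) := by exact_mod_cast h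
  linarith

/-- Central lemma: the symmetric sum `∑ₖ 1/((l+2nk)² - m²)` is nonpositive, `1 ≤ l ≤ m-1 ≤ n-1`. -/
private lemma tsum_g2_nonpos_pos (n m : ℕ) (hm : 2 ≤ m) (hmn : m ≤ n)
    (l : ℤ) (hl1 : 1 ≤ l) (hlm : l ≤ (m:ℤ) - 1)
    (f : ℤ → ℝ) (hf : ∀ k : ℤ, f k = 1 / (((l:ℝ) + 2 * n * k) ^ 2 - (m:ℝ) ^ 2))
    (hsum : Summable f) :
    ∑' k : ℤ, f k ≤ 0 := by
  have hm' : (2:ℝ) ≤ (m:ℝ) := by exact_mod_cast hm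
  have hmn' : (m:ℝ) ≤ (n:ℝ) := by exact_mod_cast hmn
  have hl1' : (1:ℝ) ≤ (l:ℝ) := by exact_mod_cast hl1
  have hlm' : (l:ℝ) ≤ (m:ℝ) - 1 := by
    have : (l:ℝ) ≤ ((m:ℤ) - 1 : ℤ) := by exact_mod_cast hlm
    push_cast at this; linarith
  -- denominator factors are never zero
  have hne1 : ∀ k : ℤ, ((l:ℝ) - m + 2 * n * k) ≠ 0 := by
    intro k
    rcases le_or_gt k 0 with hk | hk
    · have hk' : (k:ℝ) ≤ 0 := by exact_mod_cast hk
      have : (l:ℝ) - m + 2 * n * k < 0 := by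
        nlinarith [mul_nonneg (show (0:ℝ) ≤ (n:ℝ) by linarith) (show (0:ℝ) ≤ -(k:ℝ) by linarith)]
      exact ne_of_lt this
    · have hk' : (1:ℝ) ≤ (k:ℝ) := by exact_mod_cast hk
      have : 0 < (l:ℝ) - m + 2 * n * k := by
        nlinarith [mul_nonneg (show (0:ℝ) ≤ (n:ℝ) by linarith) (show (0:ℝ) ≤ (k:ℝ) - 1 by linarith)]
      exact ne_of_gt this
  have hne2 : ∀ k : ℤ, ((l:ℝ) + m + 2 * n * k) ≠ 0 := by
    intro k
    rcases le_or_gt k 0 with hk | hk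
    · rcases lt_or_eq_of_le hk with hk0 | hk0
      · have hk' : (k:ℝ) ≤ -1 := by exact_mod_cast (by omega : k ≤ -1)
        have : (l:ℝ) + m + 2 * n * k < 0 := by
          nlinarith [mul_nonneg (show (0:ℝ) ≤ (n:ℝ) by linarith) (show (0:ℝ) ≤ -(k:ℝ) - 1 by linarith)]
        exact ne_of_lt this
      · subst hk0; push_cast; intro hc; norm_num at hc; linarith
    · have hk' : (1:ℝ) ≤ (k:ℝ) := by exact_mod_cast hk
      have : 0 < (l:ℝ) + m + 2 * n * k := by
        nlinarith [mul_nonneg (show (0:ℝ) ≤ (n:ℝ) by linarith) (show (0:ℝ) ≤ (k:ℝ) - 1 by linarith)]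
      exact ne_of_gt this
  -- partial fractions
  have hterm : ∀ k : ℤ, f k =
      (1 / (2 * (m:ℝ))) * (1 / ((l:ℝ) - m + 2 * n * k) - 1 / ((l:ℝ) + m + 2 * n * k)) := by
    intro k
    have h1 := hne1 k
    have h2 := hne2 k
    have hm0 : (m:ℝ) ≠ 0 := by linarith
    have hfac : ((l:ℝ) + 2 * n * k) ^ 2 - (m:ℝ) ^ 2 =
        ((l:ℝ) - m + 2 * n * k) * ((l:ℝ) + m + 2 * n * k) := by ring
    rw [hf k, hfac]
    field_simp
    ring
  -- partial sums are nonpositive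
  have hP : ∀ K : ℕ, ∑ k ∈ Finset.Icc (-(K:ℤ)) (K:ℤ), f k ≤ 0 := by
    intro K
    rw [Finset.sum_congr rfl (fun k _ => hterm k), ← Finset.mul_sum]
    have hc : (0:ℝ) ≤ 1 / (2 * (m:ℝ)) := by positivity
    have hs : (∑ k ∈ Finset.Icc (-(K:ℤ)) (K:ℤ),
        (1 / ((l:ℝ) - m + 2 * n * k) - 1 / ((l:ℝ) + m + 2 * n * k))) ≤ 0 := by
      rw [Finset.sum_sub_distrib]
      -- reindex the first sum
      have hu : (∑ k ∈ Finset.Icc (-(K:ℤ)) (K:ℤ), 1 / ((l:ℝ) - m + 2 * n * k)) =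
          ∑ j ∈ Finset.Icc (-(K:ℤ) + -1) ((K:ℤ) + -1), 1 / ((l:ℝ) - m + 2 * n + 2 * n * j) := by
        rw [← map_add_right_Icc (-(K:ℤ)) (K:ℤ) (-1), Finset.sum_map]
        refine Finset.sum_congr rfl (fun k _ => ?_)
        simp only [addRightEmbedding_apply]
        congr 1
        push_cast
        ring
      rw [hu]
      have e1 : Finset.Icc (-(K:ℤ) + -1) ((K:ℤ) + -1) =
          insert (-(K:ℤ) + -1) (Finset.Icc (-(K:ℤ)) ((K:ℤ) - 1)) := by
        ext x; simp only [Finset.mem_Icc, Finset.mem_insert]; omega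
      have e2 : Finset.Icc (-(K:ℤ)) (K:ℤ) = insert (K:ℤ) (Finset.Icc (-(K:ℤ)) ((K:ℤ) - 1)) := by
        ext x; simp only [Finset.mem_Icc, Finset.mem_insert]; omega
      rw [e1, Finset.sum_insert (by simp only [Finset.mem_Icc]; omega),
        e2, Finset.sum_insert (by simp only [Finset.mem_Icc]; omega)]
      have hw0 : 1 / ((l:ℝ) - m + 2 * n + 2 * n * ((-(K:ℤ) + -1 : ℤ) : ℝ)) ≤ 0 := by
        apply one_div_nonpos.mpr
        have hK : (0:ℝ) ≤ (K:ℝ) := Nat.cast_nonneg K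
        push_cast
        nlinarith [mul_nonneg (show (0:ℝ) ≤ (n:ℝ) by linarith) hK]
      have hv0 : 0 ≤ 1 / ((l:ℝ) + m + 2 * n * ((K:ℤ):ℝ)) := by
        apply one_div_nonneg.mpr
        have hK : (0:ℝ) ≤ (K:ℝ) := Nat.cast_nonneg K
        push_cast
        nlinarith [mul_nonneg (show (0:ℝ) ≤ (n:ℝ) by linarith) hK]
      have hmid : (∑ k ∈ Finset.Icc (-(K:ℤ)) ((K:ℤ) - 1), 1 / ((l:ℝ) - m + 2 * n + 2 * n * k)) ≤
          ∑ k ∈ Finset.Icc (-(K:ℤ)) ((K:ℤ) - 1), 1 / ((l:ℝ) + m + 2 * n * k) := by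
        refine Finset.sum_le_sum (fun k _ => ?_)
        have hcc : (l:ℝ) + m ≤ (l:ℝ) - m + 2 * n := by linarith
        rcases le_or_gt 0 k with hk | hk
        · have hk' : (0:ℝ) ≤ (k:ℝ) := by exact_mod_cast hk
          have hpos : 0 < (l:ℝ) + m + 2 * n * k := by
            nlinarith [mul_nonneg (show (0:ℝ) ≤ (n:ℝ) by linarith) hk']
          exact one_div_le_one_div_of_le hpos (by linarith)
        · have hk' : (k:ℝ) ≤ -1 := by exact_mod_cast (by omega : k ≤ -1)
          have hneg : (l:ℝ) - m + 2 * n + 2 * n * k < 0 := by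
            nlinarith [mul_nonneg (show (0:ℝ) ≤ (n:ℝ) by linarith) (show (0:ℝ) ≤ -(k:ℝ) - 1 by linarith)]
          exact one_div_le_one_div_of_neg_of_le hneg (by linarith)
      linarith
    exact mul_nonpos_of_nonneg_of_nonpos hc hs
  -- pass to the limit
  have hmono : Monotone (fun K : ℕ => Finset.Icc (-(K:ℤ)) (K:ℤ)) := by
    intro a b hab
    apply Finset.Icc_subset_Icc <;> omega
  have hcov : ∀ x : ℤ, ∃ K : ℕ, x ∈ Finset.Icc (-(K:ℤ)) (K:ℤ) := by
    intro x
    exact ⟨x.natAbs, by simp only [Finset.mem_Icc]; omega⟩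
  have htend : Tendsto (fun K : ℕ => ∑ k ∈ Finset.Icc (-(K:ℤ)) (K:ℤ), f k)
      atTop (nhds (∑' k, f k)) :=
    hsum.hasSum.comp (tendsto_atTop_finset_of_monotone hmono hcov)
  exact le_of_tendsto htend (Eventually.of_forall hP)

private lemma tsum_g2_nonpos (n m : ℕ) (hm : 2 ≤ m) (hmn : m ≤ n)
    (l : ℤ) (hl1 : 1 ≤ |l|) (hlm : |l| ≤ (m:ℤ) - 1)
    (f : ℤ → ℝ) (hf : ∀ k : ℤ, f k = 1 / (((l:ℝ) + 2 * n * k) ^ 2 - (m:ℝ) ^ 2))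
    (hsum : Summable f) :
    ∑' k : ℤ, f k ≤ 0 := by
  rcases le_or_gt 1 l with hl | hl
  · exact tsum_g2_nonpos_pos n m hm hmn l hl
      (by rwa [abs_of_pos (by omega)] at hlm) f hf hsum
  · have hlneg : l ≤ -1 := by
      rcases lt_or_ge l 0 with h0 | h0
      · omega
      · exfalso; rw [abs_of_nonneg h0] at hl1; omega
    have hsum' : Summable (f ∘ (Equiv.neg ℤ)) := (Equiv.neg ℤ).summable_iff.mpr hsum
    have heq : ∑' k : ℤ, f (-k) = ∑' k : ℤ, f k := by
      simpa using (Equiv.neg ℤ).tsum_eq f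
    rw [← heq]
    refine tsum_g2_nonpos_pos n m hm hmn (-l) (by omega)
      (by rwa [abs_of_neg (by omega : l < 0)] at hlm) (fun k => f (-k)) ?_
      (by exact hsum')
    intro k
    show f (-k) = _
    rw [hf (-k)]
    congr 1
    push_cast
    ring


private lemma core (r n m : ℕ) (hr : 1 ≤ r) (hm : 2 ≤ m) (hmn : m ≤ n)
    (l : ℤ) (hl1 : 1 ≤ |l|) (hlm : |l| ≤ (m:ℤ) - 1)
    (a : ℤ → ℝ) (ha : ∀ k, 0 ≤ a k)
    (hsq : ∀ k : ℤ, (((l:ℝ) + 2 * n * k) ^ 2) ^ r * a k ≤ ((l:ℝ) ^ 2) ^ r * a 0) :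
    0 ≤ ∑' k : ℤ, a k / (1 / (((l:ℝ) + 2 * n * k) ^ 2) ^ r - 1 / ((m:ℝ) ^ 2) ^ r) := by
  have hm' : (2:ℝ) ≤ (m:ℝ) := by exact_mod_cast hm
  have hl0 : l ≠ 0 := by
    intro h0; rw [h0] at hl1; norm_num at hl1
  have hlR : ((l:ℝ)) ≠ 0 := Int.cast_ne_zero.mpr hl0
  have hc0 : (0:ℝ) < (m:ℝ) ^ 2 := by positivity
  have hl2m : (l:ℝ) ^ 2 < (m:ℝ) ^ 2 := by
    have hint : l ^ 2 < (m:ℤ) ^ 2 := by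
      obtain ⟨h1, h2⟩ := abs_le.mp hlm
      have hm2 : (2:ℤ) ≤ (m:ℤ) := by exact_mod_cast hm
      nlinarith
    exact_mod_cast hint
  have hl2pos : (0:ℝ) < (l:ℝ) ^ 2 := by positivity
  -- abbreviations via notation-free facts
  -- ψ facts
  have hψfac : ∀ x : ℝ,
      (∑ i ∈ Finset.range r, x ^ i * ((m:ℝ) ^ 2) ^ (r - 1 - i)) * (x - (m:ℝ) ^ 2)
        = x ^ r - ((m:ℝ) ^ 2) ^ r := fun x => geom_sum₂_mul x ((m:ℝ) ^ 2) r
  have hψmono : ∀ x y : ℝ, 0 ≤ x → x ≤ y →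
      (∑ i ∈ Finset.range r, x ^ i * ((m:ℝ) ^ 2) ^ (r - 1 - i)) ≤
        ∑ i ∈ Finset.range r, y ^ i * ((m:ℝ) ^ 2) ^ (r - 1 - i) := by
    intro x y hx hxy
    refine Finset.sum_le_sum (fun i _ => ?_)
    exact mul_le_mul_of_nonneg_right (pow_le_pow_left₀ hx hxy i) (pow_nonneg hc0.le _)
  have hψpos : ∀ x : ℝ, 0 ≤ x →
      0 < ∑ i ∈ Finset.range r, x ^ i * ((m:ℝ) ^ 2) ^ (r - 1 - i) := by
    intro x hx
    refine Finset.sum_pos' (fun i _ => mul_nonneg (pow_nonneg hx i) (pow_nonneg hc0.le _))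
      ⟨0, Finset.mem_range.mpr (by omega), ?_⟩
    simpa using pow_pos hc0 (r - 1)
  have hψge1 : ∀ x : ℝ, 0 ≤ x →
      1 ≤ ∑ i ∈ Finset.range r, x ^ i * ((m:ℝ) ^ 2) ^ (r - 1 - i) := by
    intro x hx
    have h1 : (1:ℝ) ≤ ((m:ℝ) ^ 2) ^ (r - 1 - 0) := by
      have : (1:ℝ) ≤ (m:ℝ) ^ 2 := by nlinarith
      calc (1:ℝ) = 1 ^ (r - 1 - 0) := (one_pow _).symm
        _ ≤ ((m:ℝ) ^ 2) ^ (r - 1 - 0) := pow_le_pow_left₀ (by norm_num) this _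
    calc (1:ℝ) ≤ ((m:ℝ) ^ 2) ^ (r - 1 - 0) := h1
      _ = x ^ 0 * ((m:ℝ) ^ 2) ^ (r - 1 - 0) := by rw [pow_zero, one_mul]
      _ ≤ _ := Finset.single_le_sum
          (f := fun i => x ^ i * ((m:ℝ) ^ 2) ^ (r - 1 - i))
          (fun i _ => mul_nonneg (pow_nonneg hx i) (pow_nonneg hc0.le _))
          (Finset.mem_range.mpr (by omega))
  -- denominators for k ≠ 0
  have hXgt : ∀ k : ℤ, k ≠ 0 → (m:ℝ) ^ 2 < ((l:ℝ) + 2 * n * k) ^ 2 := by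
    intro k hk
    have hq := quad_bound (n := n) (m := m) (l := l) (k := k) hmn hm hlm hk
    have hk2 : (0:ℝ) < (k:ℝ) ^ 2 := by
      have : ((k:ℝ)) ≠ 0 := Int.cast_ne_zero.mpr hk
      positivity
    linarith
  have hXpos : ∀ k : ℤ, k ≠ 0 → (0:ℝ) < ((l:ℝ) + 2 * n * k) ^ 2 :=
    fun k hk => lt_trans hc0 (hXgt k hk)
  have hdpos : ∀ k : ℤ, k ≠ 0 →
      (0:ℝ) < (((l:ℝ) + 2 * n * k) ^ 2) ^ r - ((m:ℝ) ^ 2) ^ r := by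
    intro k hk
    rw [← hψfac (((l:ℝ) + 2 * n * k) ^ 2)]
    exact mul_pos (hψpos _ (hXpos k hk).le) (by linarith [hXgt k hk])
  have hdge : ∀ k : ℤ, k ≠ 0 →
      (k:ℝ) ^ 2 / 2 ≤ (((l:ℝ) + 2 * n * k) ^ 2) ^ r - ((m:ℝ) ^ 2) ^ r := by
    intro k hk
    have hq := quad_bound (n := n) (m := m) (l := l) (k := k) hmn hm hlm hk
    rw [← hψfac (((l:ℝ) + 2 * n * k) ^ 2)]
    have h1 : 1 * (((l:ℝ) + 2 * n * k) ^ 2 - (m:ℝ) ^ 2) ≤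
        (∑ i ∈ Finset.range r, (((l:ℝ) + 2 * n * k) ^ 2) ^ i * ((m:ℝ) ^ 2) ^ (r - 1 - i)) *
          (((l:ℝ) + 2 * n * k) ^ 2 - (m:ℝ) ^ 2) :=
      mul_le_mul_of_nonneg_right (hψge1 _ (hXpos k hk).le) (by linarith [hXgt k hk])
    rw [one_mul] at h1
    linarith
  -- denominator at k = 0
  have hM0 : (0:ℝ) < ((m:ℝ) ^ 2) ^ r := pow_pos hc0 r
  have hL0 : (0:ℝ) < ((l:ℝ) ^ 2) ^ r := pow_pos hl2pos r
  have hLM : ((l:ℝ) ^ 2) ^ r < ((m:ℝ) ^ 2) ^ r := pow_lt_pow_left₀ hl2m (sq_nonneg _) (by omega)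
  -- base summable family
  have hbase : Summable (fun k : ℤ => (1:ℝ) / (k:ℝ) ^ 2) :=
    Real.summable_one_div_int_pow.mpr one_lt_two
  have hcof : ∀ {P : ℤ → Prop}, (∀ k : ℤ, k ≠ 0 → P k) → ∀ᶠ k in Filter.cofinite, P k := by
    intro P hP
    refine Filter.eventually_cofinite.mpr ((Set.finite_singleton 0).subset ?_)
    intro k hk
    by_contra h0
    exact hk (hP k h0)
  -- summability of g
  have hsg : Summable (fun k : ℤ =>
      1 / ((((l:ℝ) + 2 * n * k) ^ 2) ^ r - ((m:ℝ) ^ 2) ^ r)) := by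
    refine Summable.of_norm_bounded_eventually (g := fun k => 2 * (1 / (k:ℝ) ^ 2))
      (hbase.mul_left 2) (hcof (fun k hk => ?_))
    have hk2 : (0:ℝ) < (k:ℝ) ^ 2 := by
      have : ((k:ℝ)) ≠ 0 := Int.cast_ne_zero.mpr hk
      positivity
    rw [Real.norm_eq_abs, abs_of_pos (one_div_pos.mpr (hdpos k hk))]
    calc 1 / ((((l:ℝ) + 2 * n * k) ^ 2) ^ r - ((m:ℝ) ^ 2) ^ r)
        ≤ 1 / ((k:ℝ) ^ 2 / 2) := one_div_le_one_div_of_le (by linarith) (hdge k hk)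
      _ = 2 * (1 / (k:ℝ) ^ 2) := by rw [one_div_div, mul_one_div]
  -- summability of g2
  have hsg2 : Summable (fun k : ℤ => 1 / (((l:ℝ) + 2 * n * k) ^ 2 - (m:ℝ) ^ 2)) := by
    refine Summable.of_norm_bounded_eventually (g := fun k => 2 * (1 / (k:ℝ) ^ 2))
      (hbase.mul_left 2) (hcof (fun k hk => ?_))
    have hq := quad_bound (n := n) (m := m) (l := l) (k := k) hmn hm hlm hk
    have hk2 : (0:ℝ) < (k:ℝ) ^ 2 := by
      have : ((k:ℝ)) ≠ 0 := Int.cast_ne_zero.mpr hk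
      positivity
    rw [Real.norm_eq_abs, abs_of_pos (one_div_pos.mpr (by linarith [hXgt k hk]))]
    calc 1 / (((l:ℝ) + 2 * n * k) ^ 2 - (m:ℝ) ^ 2)
        ≤ 1 / ((k:ℝ) ^ 2 / 2) := one_div_le_one_div_of_le (by linarith) hq
      _ = 2 * (1 / (k:ℝ) ^ 2) := by rw [one_div_div, mul_one_div]
  -- summability of T
  have hsT : Summable (fun k : ℤ =>
      a k / (1 / (((l:ℝ) + 2 * n * k) ^ 2) ^ r - 1 / ((m:ℝ) ^ 2) ^ r)) := by
    refine Summable.of_norm_bounded_eventually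
      (g := fun k => (((l:ℝ) ^ 2) ^ r * a 0 * ((m:ℝ) ^ 2) ^ r * 2) * (1 / (k:ℝ) ^ 2))
      (hbase.mul_left _) (hcof (fun k hk => ?_))
    have hk2 : (0:ℝ) < (k:ℝ) ^ 2 := by
      have : ((k:ℝ)) ≠ 0 := Int.cast_ne_zero.mpr hk
      positivity
    have hXr := hdpos k hk
    have hXrpos : (0:ℝ) < (((l:ℝ) + 2 * n * k) ^ 2) ^ r := pow_pos (hXpos k hk) r
    have hDneg : 1 / (((l:ℝ) + 2 * n * k) ^ 2) ^ r - 1 / ((m:ℝ) ^ 2) ^ r < 0 := by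
      have := one_div_lt_one_div_of_lt hM0 (by linarith : ((m:ℝ) ^ 2) ^ r <
        (((l:ℝ) + 2 * n * k) ^ 2) ^ r)
      linarith
    rw [Real.norm_eq_abs, abs_div, abs_of_nonneg (ha k), abs_of_neg hDneg, neg_sub]
    have hsub : 1 / ((m:ℝ) ^ 2) ^ r - 1 / (((l:ℝ) + 2 * n * k) ^ 2) ^ r =
        ((((l:ℝ) + 2 * n * k) ^ 2) ^ r - ((m:ℝ) ^ 2) ^ r) /
          (((m:ℝ) ^ 2) ^ r * (((l:ℝ) + 2 * n * k) ^ 2) ^ r) := by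
      rw [div_sub_div _ _ (ne_of_gt hM0) (ne_of_gt hXrpos), one_mul, mul_one]
    rw [hsub, div_div_eq_mul_div]
    calc a k * (((m:ℝ) ^ 2) ^ r * (((l:ℝ) + 2 * n * k) ^ 2) ^ r) /
          ((((l:ℝ) + 2 * n * k) ^ 2) ^ r - ((m:ℝ) ^ 2) ^ r)
        ≤ (((l:ℝ) ^ 2) ^ r * a 0 * ((m:ℝ) ^ 2) ^ r) / ((k:ℝ) ^ 2 / 2) := by
          refine div_le_div₀ ?_ ?_ (by linarith) (hdge k hk)
          · exact mul_nonneg (mul_nonneg (pow_nonneg (sq_nonneg _) r) (ha 0)) hM0.le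
          · calc a k * (((m:ℝ) ^ 2) ^ r * (((l:ℝ) + 2 * n * k) ^ 2) ^ r)
                = ((((l:ℝ) + 2 * n * k) ^ 2) ^ r * a k) * ((m:ℝ) ^ 2) ^ r := by ring
              _ ≤ (((l:ℝ) ^ 2) ^ r * a 0) * ((m:ℝ) ^ 2) ^ r :=
                  mul_le_mul_of_nonneg_right (hsq k) hM0.le
              _ = ((l:ℝ) ^ 2) ^ r * a 0 * ((m:ℝ) ^ 2) ^ r := by ring
      _ = (((l:ℝ) ^ 2) ^ r * a 0 * ((m:ℝ) ^ 2) ^ r * 2) * (1 / (k:ℝ) ^ 2) := by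
          rw [div_div_eq_mul_div, mul_one_div]
  -- pointwise comparison of g with (1/psi_l) * g2
  have hψlpos : (0:ℝ) < ∑ i ∈ Finset.range r, ((l:ℝ) ^ 2) ^ i * ((m:ℝ) ^ 2) ^ (r - 1 - i) :=
    hψpos _ (sq_nonneg _)
  have hg_le : ∀ k : ℤ,
      1 / ((((l:ℝ) + 2 * n * k) ^ 2) ^ r - ((m:ℝ) ^ 2) ^ r) ≤
        (1 / (∑ i ∈ Finset.range r, ((l:ℝ) ^ 2) ^ i * ((m:ℝ) ^ 2) ^ (r - 1 - i))) *
          (1 / (((l:ℝ) + 2 * n * k) ^ 2 - (m:ℝ) ^ 2)) := by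
    intro k
    by_cases hk : k = 0
    · subst hk
      simp only [Int.cast_zero, mul_zero, add_zero]
      refine le_of_eq ?_
      rw [← hψfac ((l:ℝ) ^ 2), one_div, one_div, one_div, mul_inv]
    · have hXc : (0:ℝ) < ((l:ℝ) + 2 * n * k) ^ 2 - (m:ℝ) ^ 2 := by linarith [hXgt k hk]
      have hmonok := hψmono ((l:ℝ) ^ 2) (((l:ℝ) + 2 * n * k) ^ 2) (sq_nonneg _)
        (by linarith [hXgt k hk, hl2m])
      rw [← hψfac (((l:ℝ) + 2 * n * k) ^ 2)]
      calc 1 / ((∑ i ∈ Finset.range r, (((l:ℝ) + 2 * n * k) ^ 2) ^ i * ((m:ℝ) ^ 2) ^ (r - 1 - i)) *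
              (((l:ℝ) + 2 * n * k) ^ 2 - (m:ℝ) ^ 2))
          ≤ 1 / ((∑ i ∈ Finset.range r, ((l:ℝ) ^ 2) ^ i * ((m:ℝ) ^ 2) ^ (r - 1 - i)) *
              (((l:ℝ) + 2 * n * k) ^ 2 - (m:ℝ) ^ 2)) :=
            one_div_le_one_div_of_le (mul_pos hψlpos hXc)
              (mul_le_mul_of_nonneg_right hmonok hXc.le)
        _ = _ := by rw [one_div, one_div, one_div, mul_inv]
  have hG2 : ∑' k : ℤ, 1 / (((l:ℝ) + 2 * n * k) ^ 2 - (m:ℝ) ^ 2) ≤ 0 :=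
    tsum_g2_nonpos n m hm hmn l hl1 hlm _ (fun k => rfl) hsg2
  have hG : ∑' k : ℤ, 1 / ((((l:ℝ) + 2 * n * k) ^ 2) ^ r - ((m:ℝ) ^ 2) ^ r) ≤ 0 := by
    calc ∑' k : ℤ, 1 / ((((l:ℝ) + 2 * n * k) ^ 2) ^ r - ((m:ℝ) ^ 2) ^ r)
        ≤ ∑' k : ℤ, (1 / (∑ i ∈ Finset.range r, ((l:ℝ) ^ 2) ^ i * ((m:ℝ) ^ 2) ^ (r - 1 - i))) *
            (1 / (((l:ℝ) + 2 * n * k) ^ 2 - (m:ℝ) ^ 2)) :=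
          hsg.tsum_le_tsum hg_le (hsg2.mul_left _)
      _ = (1 / (∑ i ∈ Finset.range r, ((l:ℝ) ^ 2) ^ i * ((m:ℝ) ^ 2) ^ (r - 1 - i))) *
            ∑' k : ℤ, 1 / (((l:ℝ) + 2 * n * k) ^ 2 - (m:ℝ) ^ 2) := tsum_mul_left
      _ ≤ 0 := mul_nonpos_of_nonneg_of_nonpos (one_div_nonneg.mpr hψlpos.le) hG2
  have hCC : (0:ℝ) ≤ ((l:ℝ) ^ 2) ^ r * a 0 * ((m:ℝ) ^ 2) ^ r :=
    mul_nonneg (mul_nonneg hL0.le (ha 0)) hM0.le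
  have key : ∀ k : ℤ,
      -((((l:ℝ) ^ 2) ^ r * a 0 * ((m:ℝ) ^ 2) ^ r) *
          (1 / ((((l:ℝ) + 2 * n * k) ^ 2) ^ r - ((m:ℝ) ^ 2) ^ r))) ≤
        a k / (1 / (((l:ℝ) + 2 * n * k) ^ 2) ^ r - 1 / ((m:ℝ) ^ 2) ^ r) := by
    intro k
    by_cases hk : k = 0
    · subst hk
      simp only [Int.cast_zero, mul_zero, add_zero]
      have hL0' : ((l:ℝ) ^ 2) ^ r ≠ 0 := ne_of_gt hL0
      have hM0' : ((m:ℝ) ^ 2) ^ r ≠ 0 := ne_of_gt hM0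
      have h1 : ((l:ℝ) ^ 2) ^ r - ((m:ℝ) ^ 2) ^ r ≠ 0 := ne_of_lt (by linarith)
      have h2 : (1:ℝ) / ((l:ℝ) ^ 2) ^ r - 1 / ((m:ℝ) ^ 2) ^ r ≠ 0 := by
        have := one_div_lt_one_div_of_lt hL0 hLM
        exact ne_of_gt (by linarith)
      refine le_of_eq ?_
      rw [eq_div_iff h2]
      field_simp
      ring
    · have hXr := hdpos k hk
      have hXrpos : (0:ℝ) < (((l:ℝ) + 2 * n * k) ^ 2) ^ r := pow_pos (hXpos k hk) r
      have hDneg : 1 / (((l:ℝ) + 2 * n * k) ^ 2) ^ r - 1 / ((m:ℝ) ^ 2) ^ r < 0 := by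
        have := one_div_lt_one_div_of_lt hM0
          (by linarith : ((m:ℝ) ^ 2) ^ r < (((l:ℝ) + 2 * n * k) ^ 2) ^ r)
        linarith
      rw [le_div_iff_of_neg hDneg]
      have hXr' : (((l:ℝ) + 2 * n * k) ^ 2) ^ r ≠ 0 := ne_of_gt hXrpos
      have hM0' : ((m:ℝ) ^ 2) ^ r ≠ 0 := ne_of_gt hM0
      have hsub' : (((l:ℝ) + 2 * n * k) ^ 2) ^ r - ((m:ℝ) ^ 2) ^ r ≠ 0 := ne_of_gt hXr
      have hED : -((((l:ℝ) ^ 2) ^ r * a 0 * ((m:ℝ) ^ 2) ^ r) *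
            (1 / ((((l:ℝ) + 2 * n * k) ^ 2) ^ r - ((m:ℝ) ^ 2) ^ r))) *
          (1 / (((l:ℝ) + 2 * n * k) ^ 2) ^ r - 1 / ((m:ℝ) ^ 2) ^ r) =
          (((l:ℝ) ^ 2) ^ r * a 0 * ((m:ℝ) ^ 2) ^ r) /
            ((((l:ℝ) + 2 * n * k) ^ 2) ^ r * ((m:ℝ) ^ 2) ^ r) := by
        field_simp
        ring
      rw [hED, le_div_iff₀ (mul_pos hXrpos hM0)]
      calc a k * ((((l:ℝ) + 2 * n * k) ^ 2) ^ r * ((m:ℝ) ^ 2) ^ r)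
          = ((((l:ℝ) + 2 * n * k) ^ 2) ^ r * a k) * ((m:ℝ) ^ 2) ^ r := by ring
        _ ≤ (((l:ℝ) ^ 2) ^ r * a 0) * ((m:ℝ) ^ 2) ^ r :=
            mul_le_mul_of_nonneg_right (hsq k) hM0.le
        _ = ((l:ℝ) ^ 2) ^ r * a 0 * ((m:ℝ) ^ 2) ^ r := by ring
  calc (0:ℝ)
      ≤ -((((l:ℝ) ^ 2) ^ r * a 0 * ((m:ℝ) ^ 2) ^ r) *
          ∑' k : ℤ, 1 / ((((l:ℝ) + 2 * n * k) ^ 2) ^ r - ((m:ℝ) ^ 2) ^ r)) :=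
        neg_nonneg.mpr (mul_nonpos_of_nonneg_of_nonpos hCC hG)
    _ = ∑' k : ℤ, -((((l:ℝ) ^ 2) ^ r * a 0 * ((m:ℝ) ^ 2) ^ r) *
          (1 / ((((l:ℝ) + 2 * n * k) ^ 2) ^ r - ((m:ℝ) ^ 2) ^ r))) := by
        rw [← tsum_mul_left, ← tsum_neg]
    _ ≤ ∑' k : ℤ, a k / (1 / (((l:ℝ) + 2 * n * k) ^ 2) ^ r - 1 / ((m:ℝ) ^ 2) ^ r) :=
        ((hsg.mul_left _).neg).tsum_le_tsum key hsT

end auxstmt19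

theorem stmt19 (B : ℝ → ℂ) (r n m : ℕ) (hr : 1 ≤ r) (hn : 1 ≤ n) (hm : 1 ≤ m) (hmn : m ≤ n)
    (hper : Function.Periodic B (2 * Real.pi)) (hB : sqInt B)
    (h : ∀ l : ℤ, 1 ≤ |l| → |l| ≤ (m : ℤ) - 1 → ∀ k : ℤ,
        ((|l + 2 * (n : ℤ) * k| : ℤ) : ℝ) ^ r * ‖fc B (l + 2 * (n : ℤ) * k)‖ ≤
          ((|l| : ℤ) : ℝ) ^ r * ‖fc B l‖) :
    ∀ l : ℤ, 1 ≤ |l| → |l| ≤ (m : ℤ) - 1 →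
      0 ≤ ∑' k : ℤ, ‖fc B (l + 2 * (n : ℤ) * k)‖ ^ 2 /
            (1 / (((l + 2 * (n : ℤ) * k : ℤ) : ℝ)) ^ (2 * r) - 1 / (m : ℝ) ^ (2 * r)) := by
  intro l hl1 hlm
  have hm2 : 2 ≤ m := by
    have h1 : (1:ℤ) ≤ (m:ℤ) - 1 := le_trans hl1 hlm
    omega
  have e0 : l + 2 * (n:ℤ) * 0 = l := by ring
  have hsq : ∀ k : ℤ, (((l:ℝ) + 2 * n * k) ^ 2) ^ r *
      (‖fc B (l + 2 * (n:ℤ) * k)‖ ^ 2) ≤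
      ((l:ℝ) ^ 2) ^ r * (‖fc B (l + 2 * (n:ℤ) * 0)‖ ^ 2) := by
    intro k
    rw [e0]
    have hh := h l hl1 hlm k
    have hnn1 : (0:ℝ) ≤ ((|l + 2 * (n:ℤ) * k| : ℤ) : ℝ) ^ r *
        ‖fc B (l + 2 * (n:ℤ) * k)‖ :=
      mul_nonneg (pow_nonneg (by exact_mod_cast abs_nonneg _) r) (norm_nonneg _)
    have h2 := mul_le_mul hh hh hnn1 (le_trans hnn1 hh)
    have eL : ((|l + 2 * (n:ℤ) * k| : ℤ) : ℝ) ^ r * ‖fc B (l + 2 * (n:ℤ) * k)‖ *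
        (((|l + 2 * (n:ℤ) * k| : ℤ) : ℝ) ^ r * ‖fc B (l + 2 * (n:ℤ) * k)‖) =
        (((l:ℝ) + 2 * n * k) ^ 2) ^ r * (‖fc B (l + 2 * (n:ℤ) * k)‖ ^ 2) := by
      rw [Int.cast_abs, mul_mul_mul_comm, ← pow_add, ← pow_two,
        show r + r = 2 * r by ring, pow_mul, sq_abs]
      push_cast
      ring
    have eR : ((|l| : ℤ) : ℝ) ^ r * ‖fc B l‖ *
        (((|l| : ℤ) : ℝ) ^ r * ‖fc B l‖) =
        ((l:ℝ) ^ 2) ^ r * (‖fc B l‖ ^ 2) := by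
      rw [Int.cast_abs, mul_mul_mul_comm, ← pow_add, ← pow_two,
        show r + r = 2 * r by ring, pow_mul, sq_abs]
    rw [eL, eR] at h2
    exact h2
  calc (0:ℝ)
      ≤ ∑' k : ℤ, ‖fc B (l + 2 * (n:ℤ) * k)‖ ^ 2 /
          (1 / (((l:ℝ) + 2 * n * k) ^ 2) ^ r - 1 / ((m:ℝ) ^ 2) ^ r) :=
        core r n m hr hm2 hmn l hl1 hlm
          (fun k => ‖fc B (l + 2 * (n:ℤ) * k)‖ ^ 2)
          (fun k => sq_nonneg _) hsq
    _ = ∑' k : ℤ, ‖fc B (l + 2 * (n:ℤ) * k)‖ ^ 2 /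
          (1 / (((l + 2 * (n:ℤ) * k : ℤ) : ℝ)) ^ (2 * r) - 1 / (m : ℝ) ^ (2 * r)) := by
        refine tsum_congr (fun k => ?_)
        rw [show ((l + 2 * (n:ℤ) * k : ℤ) : ℝ) = (l:ℝ) + 2 * n * k by push_cast; ring,
          pow_mul ((l:ℝ) + 2 * n * k) 2 r, pow_mul (m:ℝ) 2 r]
end
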